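/- Let Ω be either the bidisk 𝔻² or the unit ball 𝔹₂ in ℂ², and let Φ(z₁,z₂) = (z₁² + z₂², z₁² z₂²). Then Φ(Ω) is open and Φ : Ω → Φ(Ω) is a holomorphic proper map. -/

import Mathlib

open MeasureTheory Metric Set
open scoped ENNReal

noncomputable section

/-- Continuity of roots of a monic quadratic, qualitative version. -/
lemma quad_roots_near (u₀ v₀ : ℂ) (ε : ℝ) (hε : 0 < ε) :
    ∃ δ > (0:ℝ), ∀ a b : ℂ, ‖a - (u₀ + v₀)‖ < δ →
      ‖b - u₀ * v₀‖ < δ →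
      ∃ u v : ℂ, u + v = a ∧ u * v = b ∧
        ‖u - u₀‖ < ε ∧ ‖v - v₀‖ < ε := by
  set a₀ := u₀ + v₀ with ha₀
  set b₀ := u₀ * v₀ with hb₀
  set M : ℝ := ‖a₀‖ + ‖b₀‖ + 3 with hM
  have hM1 : (0:ℝ) < M + 1 := by
    have := norm_nonneg a₀; have := norm_nonneg b₀
    simp only [hM]; linarith
  refine ⟨min 1 (min (ε/2) ((ε/2)^2 / (M+1))), by positivity, ?_⟩
  intro a b ha hb
  obtain ⟨s, hs⟩ := IsAlgClosed.exists_pow_nat_eq (a ^ 2 - 4 * b) (n := 2) (by norm_num)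
  set u := (a + s) / 2 with hu
  set v := (a - s) / 2 with hv
  have hsum : u + v = a := by rw [hu, hv]; ring
  have hprod : u * v = b := by rw [hu, hv]; linear_combination (-1/4 : ℂ) * hs
  have ha1 : ‖a - a₀‖ < 1 := lt_of_lt_of_le ha (min_le_left _ _)
  have hb1 : ‖b - b₀‖ < 1 := lt_of_lt_of_le hb (min_le_left _ _)
  have haa : ‖a‖ ≤ ‖a₀‖ + 1 := by
    have h := norm_add_le (a - a₀) a₀
    rw [sub_add_cancel] at h
    linarith
  have hbb : ‖b‖ ≤ ‖b₀‖ + 1 := by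
    have h := norm_add_le (b - b₀) b₀
    rw [sub_add_cancel] at h
    linarith
  have hs2 : ‖s‖ ^ 2 ≤ ‖a‖ ^ 2 + 4 * ‖b‖ := by
    have h1 : ‖s‖ ^ 2 = ‖a ^ 2 - 4 * b‖ := by
      rw [← hs, norm_pow]
    have h2 : ‖a ^ 2 - 4 * b‖ ≤ ‖a ^ 2‖ + ‖4 * b‖ :=
      norm_sub_le _ _
    have h3 : ‖a ^ 2‖ = ‖a‖ ^ 2 := norm_pow _ _
    have h4 : ‖4 * b‖ = 4 * ‖b‖ := by
      rw [norm_mul]; norm_num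
    rw [h1]; rw [h3, h4] at h2; exact h2
  have hsb : ‖s‖ ≤ ‖a‖ + ‖b‖ + 1 := by
    have h' : ‖s‖ ^ 2 ≤ (‖a‖ + ‖b‖ + 1) ^ 2 := by
      nlinarith [sq_nonneg (‖b‖ - 1), norm_nonneg a, norm_nonneg b]
    exact (pow_le_pow_iff_left₀ (norm_nonneg s)
      (by positivity) (by norm_num)).mp h'
  have huM : ‖u‖ ≤ M := by
    have h1 : ‖u‖ ≤ (‖a‖ + ‖s‖) / 2 := by
      rw [hu, norm_div]
      have := norm_add_le a s
      simp only [Complex.norm_ofNat, Complex.norm_two]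
      linarith
    have := norm_nonneg b
    simp only [hM]; nlinarith
  have key : (u - u₀) * (u - v₀) = (a - a₀) * u + (b₀ - b) := by
    rw [ha₀, hb₀]; linear_combination u * hsum - hprod
  have hδ2 : ‖a - a₀‖ < (ε/2)^2 / (M+1) :=
    lt_of_lt_of_le ha (le_trans (min_le_right _ _) (min_le_right _ _))
  have hδ2' : ‖b₀ - b‖ < (ε/2)^2 / (M+1) := by
    rw [norm_sub_rev]
    exact lt_of_lt_of_le hb (le_trans (min_le_right _ _) (min_le_right _ _))
  have hP : ‖u - u₀‖ * ‖u - v₀‖ < (ε/2)^2 := by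
    have h1 : ‖(a - a₀) * u + (b₀ - b)‖ ≤
        ‖a - a₀‖ * ‖u‖ + ‖b₀ - b‖ := by
      have := norm_add_le ((a - a₀) * u) (b₀ - b)
      rw [norm_mul] at this; exact this
    have h2 : ‖a - a₀‖ * ‖u‖ + ‖b₀ - b‖ <
        (ε/2)^2 / (M+1) * M + (ε/2)^2 / (M+1) := by
      have h5 := norm_nonneg (a - a₀)
      have h6 := norm_nonneg u
      have h7 : (0:ℝ) < (ε/2)^2 / (M+1) := by positivity
      nlinarith
    have h3 : (ε/2)^2 / (M+1) * M + (ε/2)^2 / (M+1) = (ε/2)^2 := by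
      field_simp
    have h4 : ‖u - u₀‖ * ‖u - v₀‖ =
        ‖(a - a₀) * u + (b₀ - b)‖ := by rw [← norm_mul, key]
    rw [h4]; rw [← h3]; exact lt_of_le_of_lt h1 h2
  have hδε : ‖a - a₀‖ < ε / 2 :=
    lt_of_lt_of_le ha (le_trans (min_le_right _ _) (min_le_left _ _))
  by_cases hc : ‖u - u₀‖ < ε / 2
  · refine ⟨u, v, hsum, hprod, lt_of_lt_of_le hc (by linarith), ?_⟩
    have hvv : v - v₀ = (a - a₀) - (u - u₀) := by rw [ha₀, ← hsum]; ring
    have := norm_sub_le (a - a₀) (u - u₀)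
    rw [← hvv] at this
    linarith
  · push_neg at hc
    have hc2 : ‖u - v₀‖ < ε / 2 := by
      by_contra hcon; push_neg at hcon
      have := mul_le_mul hc hcon (by linarith) (norm_nonneg _)
      nlinarith
    refine ⟨v, u, by rw [← hsum]; ring, by rw [← hprod]; ring, ?_,
      lt_of_lt_of_le hc2 (by linarith)⟩
    have hvv : v - u₀ = (a - a₀) - (u - v₀) := by rw [ha₀, ← hsum]; ring
    have := norm_sub_le (a - a₀) (u - v₀)
    rw [← hvv] at this
    linarith

/-- If two pairs have the same sum and product, they agree up to permutation. -/
lemma pair_eq_of_sym (p q r t : ℂ) (h0 : p + q = r + t) (h1 : p * q = r * t) :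
    (p = r ∧ q = t) ∨ (p = t ∧ q = r) := by
  have h : (p - r) * (p - t) = 0 := by linear_combination p * h0 - h1
  rcases mul_eq_zero.mp h with h | h
  · have hp : p = r := by linear_combination h
    exact Or.inl ⟨hp, by linear_combination h0 - h⟩
  · have hp : p = t := by linear_combination h
    exact Or.inr ⟨hp, by linear_combination h0 - h⟩

/-- Membership in the Bergman space `L²ₐ(Ω)` of a set `Ω ⊆ ℂᵈ`, as a function:
holomorphic on `Ω` and square integrable with respect to Lebesgue measure on `Ω`. -/
def BergmanMem {d : ℕ} (Ω : Set (Fin d → ℂ)) (f : (Fin d → ℂ) → ℂ) : Prop :=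
  AnalyticOnNhd ℂ f Ω ∧ MemLp f 2 (volume.restrict Ω)

/-- `E` is `L²ₐ`-removable in `Ω`: every function of the Bergman space of `Ω - E` extends
analytically to a function of the Bergman space of `Ω`. -/
def IsL2aRemovable {d : ℕ} (Ω E : Set (Fin d → ℂ)) : Prop :=
  ∀ f : (Fin d → ℂ) → ℂ, BergmanMem (Ω \ E) f →
    ∃ g : (Fin d → ℂ) → ℂ, BergmanMem Ω g ∧ EqOn g f (Ω \ E)

/-- `A` is locally `L²ₐ`-removable in `Ω`: near every point of `Ω` there are arbitrarily small
open domains `U` in which `U ∩ A` is `L²ₐ`-removable. -/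
def IsLocallyL2aRemovableIn {d : ℕ} (Ω A : Set (Fin d → ℂ)) : Prop :=
  ∀ lam ∈ Ω, ∀ ε > (0 : ℝ), ∃ U : Set (Fin d → ℂ),
    IsOpen U ∧ IsConnected U ∧ lam ∈ U ∧ U ⊆ ball lam ε ∧ IsL2aRemovable U (U ∩ A)

/-- A subset `J` of `ℂᵈ` is locally `L²ₐ`-removable: each point of `ℂᵈ` has a domain around it
in which `J` is locally `L²ₐ`-removable. -/
def IsLocallyL2aRemovable {d : ℕ} (J : Set (Fin d → ℂ)) : Prop :=
  ∀ lam : Fin d → ℂ, ∃ Ω : Set (Fin d → ℂ), IsOpen Ω ∧ IsConnected Ω ∧ lam ∈ Ω ∧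
    IsLocallyL2aRemovableIn Ω (J ∩ Ω)

/-- `E` is a zero variety of `Ω`: the zero set of a nonconstant holomorphic function on `Ω`. -/
def IsZeroVariety {d : ℕ} (Ω E : Set (Fin d → ℂ)) : Prop :=
  ∃ f : (Fin d → ℂ) → ℂ, AnalyticOnNhd ℂ f Ω ∧ (¬ ∃ c : ℂ, EqOn f (fun _ => c) Ω) ∧
    E = {z ∈ Ω | f z = 0}

/-- `E` is a good zero variety of `Ω`: a zero variety such that near each point of the closure
of `Ω`, the closure of `E` is cut out of `closure Ω` by a locally defined holomorphic function. -/
def IsGoodZeroVariety {d : ℕ} (Ω E : Set (Fin d → ℂ)) : Prop :=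
  IsZeroVariety Ω E ∧ ∀ lam ∈ closure Ω, ∃ r > (0 : ℝ), ∃ h : (Fin d → ℂ) → ℂ,
    AnalyticOnNhd ℂ h (ball lam r) ∧
    ball lam r ∩ closure E = {z ∈ ball lam r ∩ closure Ω | h z = 0}

/-- `F` is a holomorphic proper map on `Ω`: `F` is holomorphic on `Ω`, its image `F(Ω)` is open,
and `F : Ω → F(Ω)` is proper, i.e. preimages (within `Ω`) of compact subsets of `F(Ω)` are
compact. -/
def IsHolomorphicProperMapOn {d : ℕ} (F : (Fin d → ℂ) → Fin d → ℂ) (Ω : Set (Fin d → ℂ)) :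
    Prop :=
  AnalyticOnNhd ℂ F Ω ∧ IsOpen (F '' Ω) ∧
    ∀ K : Set (Fin d → ℂ), K ⊆ F '' Ω → IsCompact K → IsCompact {z ∈ Ω | F z ∈ K}

theorem phi_square_proper (Ω : Set (Fin 2 → ℂ))
    (hΩ : Ω = {z : Fin 2 → ℂ | ‖z 0‖ < 1 ∧ ‖z 1‖ < 1} ∨
      Ω = {z : Fin 2 → ℂ | ‖z 0‖ ^ 2 + ‖z 1‖ ^ 2 < 1}) :
    IsOpen ((fun z : Fin 2 → ℂ => ![z 0 ^ 2 + z 1 ^ 2, z 0 ^ 2 * z 1 ^ 2]) '' Ω) ∧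
      IsHolomorphicProperMapOn (fun z : Fin 2 → ℂ => ![z 0 ^ 2 + z 1 ^ 2, z 0 ^ 2 * z 1 ^ 2])
        Ω := by
  set Φ : (Fin 2 → ℂ) → Fin 2 → ℂ :=
    fun z => ![z 0 ^ 2 + z 1 ^ 2, z 0 ^ 2 * z 1 ^ 2] with hΦ
  have hΦ0 : ∀ z, Φ z 0 = z 0 ^ 2 + z 1 ^ 2 := fun z => rfl
  have hΦ1 : ∀ z, Φ z 1 = z 0 ^ 2 * z 1 ^ 2 := fun z => rfl
  -- membership in Ω depends only on the squares of moduli, symmetrically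
  have hmem : ∀ z w : Fin 2 → ℂ, z ∈ Ω → Φ w = Φ z → w ∈ Ω := by
    intro z w hz hw
    have e0 : w 0 ^ 2 + w 1 ^ 2 = z 0 ^ 2 + z 1 ^ 2 := by
      have := congrFun hw 0; rwa [hΦ0, hΦ0] at this
    have e1 : w 0 ^ 2 * w 1 ^ 2 = z 0 ^ 2 * z 1 ^ 2 := by
      have := congrFun hw 1; rwa [hΦ1, hΦ1] at this
    have habs : ∀ c d : ℂ, c ^ 2 = d ^ 2 → ‖c‖ = ‖d‖ := by
      intro c d hcd
      have : ‖c‖ ^ 2 = ‖d‖ ^ 2 := by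
        rw [← norm_pow, ← norm_pow, hcd]
      nlinarith [norm_nonneg c, norm_nonneg d]
    rcases pair_eq_of_sym _ _ _ _ e0 e1 with ⟨f0, f1⟩ | ⟨f0, f1⟩
    · have g0 := habs _ _ f0
      have g1 := habs _ _ f1
      rcases hΩ with h | h <;> rw [h] at hz ⊢ <;>
        simp only [Set.mem_setOf_eq] at hz ⊢
      · exact ⟨g0 ▸ hz.1, g1 ▸ hz.2⟩
      · rw [g0, g1]; exact hz
    · have g0 := habs _ _ f0
      have g1 := habs _ _ f1
      rcases hΩ with h | h <;> rw [h] at hz ⊢ <;>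
        simp only [Set.mem_setOf_eq] at hz ⊢
      · exact ⟨g0 ▸ hz.2, g1 ▸ hz.1⟩
      · rw [g0, g1]; linarith
  -- openness of the image
  have hopen : IsOpen (Φ '' Ω) := by
    rw [Metric.isOpen_iff]
    rintro w ⟨z, hz, rfl⟩
    set u₀ := z 0 ^ 2 with hu₀
    set v₀ := z 1 ^ 2 with hv₀
    -- choose ε, with the property that nearby root pairs give points of Ω
    obtain ⟨ε, hε, hQ⟩ : ∃ ε > (0:ℝ), ∀ u v : ℂ, ‖u - u₀‖ < ε →
        ‖v - v₀‖ < ε → ∀ y : Fin 2 → ℂ,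
        ‖y 0‖ ^ 2 = ‖u‖ → ‖y 1‖ ^ 2 = ‖v‖ →
        y ∈ Ω := by
      have key : ∀ (u : ℂ) (c : ℝ), ‖u - u₀‖ < c →
          ‖u‖ < ‖u₀‖ + c := by
        intro u c h
        have := norm_add_le (u - u₀) u₀
        rw [sub_add_cancel] at this
        linarith
      have key' : ∀ (v : ℂ) (c : ℝ), ‖v - v₀‖ < c →
          ‖v‖ < ‖v₀‖ + c := by
        intro v c h
        have := norm_add_le (v - v₀) v₀
        rw [sub_add_cancel] at this
        linarith
      have habs0 : ‖u₀‖ = ‖z 0‖ ^ 2 := by rw [hu₀, norm_pow]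
      have habs1 : ‖v₀‖ = ‖z 1‖ ^ 2 := by rw [hv₀, norm_pow]
      rcases hΩ with h | h
      · rw [h] at hz; simp only [Set.mem_setOf_eq] at hz
        obtain ⟨hz0, hz1⟩ := hz
        have h0 : ‖u₀‖ < 1 := by
          rw [habs0]; nlinarith [norm_nonneg (z 0)]
        have h1 : ‖v₀‖ < 1 := by
          rw [habs1]; nlinarith [norm_nonneg (z 1)]
        refine ⟨min (1 - ‖u₀‖) (1 - ‖v₀‖),
          lt_min (by linarith) (by linarith), ?_⟩
        intro u v hu hv y hy0 hy1
        rw [h]; simp only [Set.mem_setOf_eq]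
        have hu' := key u _ (lt_of_lt_of_le hu (min_le_left _ _))
        have hv' := key' v _ (lt_of_lt_of_le hv (min_le_right _ _))
        constructor
        · nlinarith [norm_nonneg (y 0)]
        · nlinarith [norm_nonneg (y 1)]
      · rw [h] at hz; simp only [Set.mem_setOf_eq] at hz
        have hsum : ‖u₀‖ + ‖v₀‖ < 1 := by
          rw [habs0, habs1]; exact hz
        refine ⟨(1 - (‖u₀‖ + ‖v₀‖)) / 2, by linarith, ?_⟩
        intro u v hu hv y hy0 hy1
        rw [h]; simp only [Set.mem_setOf_eq]
        have hu' := key u _ hu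
        have hv' := key' v _ hv
        rw [hy0, hy1]; linarith
    obtain ⟨δ, hδ, hroots⟩ := quad_roots_near u₀ v₀ ε hε
    refine ⟨δ, hδ, ?_⟩
    intro w' hw'
    have hd0 : ‖w' 0 - (u₀ + v₀)‖ < δ := by
      have h := dist_le_pi_dist w' (Φ z) 0
      rw [Complex.dist_eq] at h
      have heq : Φ z 0 = u₀ + v₀ := rfl
      rw [heq] at h
      exact lt_of_le_of_lt h (mem_ball.mp hw')
    have hd1 : ‖w' 1 - u₀ * v₀‖ < δ := by
      have h := dist_le_pi_dist w' (Φ z) 1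
      rw [Complex.dist_eq] at h
      have heq : Φ z 1 = u₀ * v₀ := rfl
      rw [heq] at h
      exact lt_of_le_of_lt h (mem_ball.mp hw')
    obtain ⟨u, v, hsum, hprod, hu, hv⟩ := hroots (w' 0) (w' 1) hd0 hd1
    obtain ⟨s, hs⟩ := IsAlgClosed.exists_pow_nat_eq u (n := 2) (by norm_num)
    obtain ⟨t, ht⟩ := IsAlgClosed.exists_pow_nat_eq v (n := 2) (by norm_num)
    set y : Fin 2 → ℂ := ![s, t] with hy
    have hy0 : y 0 = s := rfl
    have hy1 : y 1 = t := rfl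
    have hyΩ : y ∈ Ω := by
      refine hQ u v hu hv y ?_ ?_
      · rw [hy0, ← norm_pow, hs]
      · rw [hy1, ← norm_pow, ht]
    refine ⟨y, hyΩ, ?_⟩
    funext i
    fin_cases i
    · show y 0 ^ 2 + y 1 ^ 2 = w' 0
      rw [hy0, hy1, hs, ht]; exact hsum
    · show y 0 ^ 2 * y 1 ^ 2 = w' 1
      rw [hy0, hy1, hs, ht]; exact hprod
  -- analyticity
  have hana : ∀ x : Fin 2 → ℂ, AnalyticAt ℂ Φ x := by
    intro x
    rw [hΦ]
    have h0 : ∀ i : Fin 2, AnalyticAt ℂ (fun z : Fin 2 → ℂ => z i) x :=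
      fun i => (ContinuousLinearMap.proj i : (Fin 2 → ℂ) →L[ℂ] ℂ).analyticAt x
    apply analyticAt_pi_iff.mpr
    intro i
    fin_cases i
    · exact (((h0 0).pow 2).add ((h0 1).pow 2))
    · exact (((h0 0).pow 2).mul ((h0 1).pow 2))
  have hcont : Continuous Φ := by
    rw [continuous_iff_continuousAt]
    exact fun x => (hana x).continuousAt
  -- boundedness of Ω
  have hbdd : Ω ⊆ closedBall 0 1 := by
    intro z hz
    rw [mem_closedBall, dist_zero_right]
    rw [pi_norm_le_iff_of_nonneg zero_le_one]
    intro i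
    rcases hΩ with h | h <;> rw [h] at hz <;> simp only [Set.mem_setOf_eq] at hz
    · fin_cases i
      · exact le_of_lt hz.1
      · exact le_of_lt hz.2
    · have h0 := norm_nonneg (z 0)
      have h1 := norm_nonneg (z 1)
      fin_cases i
      · show ‖z 0‖ ≤ 1; nlinarith
      · show ‖z 1‖ ≤ 1; nlinarith
  refine ⟨hopen, fun x hx => hana x, hopen, ?_⟩
  intro K hK hKc
  have hset : {z | z ∈ Ω ∧ Φ z ∈ K} = Φ ⁻¹' K := by
    ext z
    simp only [Set.mem_setOf_eq, Set.mem_preimage]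
    refine ⟨fun h => h.2, fun h => ⟨?_, h⟩⟩
    obtain ⟨z', hz', hz'e⟩ := hK h
    exact hmem z' z hz' hz'e.symm
  rw [hset]
  apply Metric.isCompact_of_isClosed_isBounded
  · exact hKc.isClosed.preimage hcont
  · apply Bornology.IsBounded.subset (Metric.isBounded_closedBall (x := (0 : Fin 2 → ℂ)) (r := 1))
    intro z hz
    rw [Set.mem_preimage] at hz
    obtain ⟨z', hz', hz'e⟩ := hK hz
    exact hbdd (hmem z' z hz' hz'e.symm)
end
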